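/- In the universal enveloping algebra of sl₂ over ℚ, with standard generators e, f, h, for all nonnegative integers k, l the identity e^{(l)} f^{(k)} = Σ_{m=0}^{min(k,l)} f^{(k−m)} · binom(h − k − l + 2m, m) · e^{(l−m)} holds, where x^{(n)} = x^n/n! and binom(h,m) = h(h−1)⋯(h−m+1)/m!. -/

import Mathlib

/-- The divided power `x^(n) = x^n / n!` in a `ℚ`-algebra. -/
noncomputable def dividedPower {A : Type} [Ring A] [Algebra ℚ A] (x : A) (n : ℕ) : A :=
  ((n.factorial : ℚ))⁻¹ • x ^ n

/-- The binomial element `binom(x, m) = x (x-1) ⋯ (x-m+1) / m!` in a `ℚ`-algebra. -/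
noncomputable def binomElt {A : Type} [Ring A] [Algebra ℚ A] (x : A) (m : ℕ) : A :=
  ((m.factorial : ℚ))⁻¹ • ((List.range m).map (fun j => x - (j : ℚ) • (1 : A))).prod

section
variable {A : Type} [Ring A] [Algebra ℚ A]

lemma binomElt_eq (x : A) (m : ℕ) :
    binomElt x m
      = ((m.factorial : ℚ))⁻¹ • ((List.range m).map (fun j : ℕ => x - (j : ℚ) • (1 : A))).prod := by
  unfold binomElt
  congr 2
  induction (List.range m) with
  | nil => rfl
  | cons a t ih => simp_all

lemma binomElt_zero (x : A) : binomElt x 0 = 1 := by simp [binomElt_eq]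

lemma binomElt_succ_right (x : A) (m : ℕ) :
    ((m:ℚ)+1) • binomElt x (m+1) = binomElt x m * (x - (m:ℚ) • (1:A)) := by
  rw [binomElt_eq, binomElt_eq, List.range_succ, List.map_append, List.prod_append]
  simp only [List.map_cons, List.map_nil, List.prod_cons, List.prod_nil, mul_one,
    smul_smul, smul_mul_assoc]
  congr 2
  have h2 : ((m:ℚ)+1) ≠ 0 := by positivity
  have h3 : ((m.factorial:ℚ)) ≠ 0 := Nat.cast_ne_zero.2 m.factorial_ne_zero
  rw [Nat.factorial_succ]
  push_cast
  field_simp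

lemma binomElt_succ_left (x : A) (m : ℕ) :
    ((m:ℚ)+1) • binomElt x (m+1) = x * binomElt (x - 1) m := by
  rw [binomElt_eq, binomElt_eq, List.range_succ_eq_map, List.map_cons, List.prod_cons,
    List.map_map]
  have : ((fun j : ℕ => x - (j : ℚ) • (1 : A)) ∘ Nat.succ) =
      (fun j : ℕ => (x - 1) - (j : ℚ) • (1 : A)) := by
    funext j
    simp only [Function.comp_apply, Nat.succ_eq_add_one]
    push_cast
    rw [add_smul, one_smul]
    abel
  rw [this]
  simp only [Nat.cast_zero, zero_smul, sub_zero, smul_smul, mul_smul_comm]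
  congr 2
  have h2 : ((m:ℚ)+1) ≠ 0 := by positivity
  have h3 : ((m.factorial:ℚ)) ≠ 0 := Nat.cast_ne_zero.2 m.factorial_ne_zero
  rw [Nat.factorial_succ]
  push_cast
  field_simp

lemma commute_binomElt (x y : A) (hxy : Commute x y) (c : ℚ) (m : ℕ) :
    Commute x (binomElt (y - c • 1) m) := by
  rw [binomElt_eq]
  apply Commute.smul_right
  apply Commute.list_prod_right
  intro z hz
  simp only [List.mem_map, List.mem_range] at hz
  obtain ⟨j, _, rfl⟩ := hz
  exact (hxy.sub_right ((Commute.one_right x).smul_right c)).sub_right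
    ((Commute.one_right x).smul_right _)

lemma smul_cancel {c : ℚ} (hc : c ≠ 0) {a b : A} (h : c • a = c • b) : a = b := by
  have := congrArg (fun z => c⁻¹ • z) h
  simpa [smul_smul, inv_mul_cancel₀ hc] using this

lemma sub_smul_one (x : A) (c d : ℚ) : (x - c • 1) - d • (1:A) = x - (c+d) • 1 := by
  rw [add_smul]; abel

lemma pascal (x : A) (n : ℚ) (m : ℕ) :
    (n + ((m:ℚ)+1)) • binomElt x (m+1)
      = n • binomElt (x - 1) (m+1) + (x + n • (1:A)) * binomElt (x - 1) m := by
  have hm : ((m:ℚ)+1) ≠ 0 := by positivity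
  apply smul_cancel hm
  have hc : Commute x (binomElt (x - 1) m) := by
    simpa using commute_binomElt x x (Commute.refl x) 1 m
  rw [smul_comm, binomElt_succ_left, smul_add, smul_comm ((m:ℚ)+1) n, binomElt_succ_right]
  rw [mul_sub, mul_sub, ← hc.eq, mul_smul_comm, add_mul, smul_mul_assoc]
  simp only [mul_one, one_mul]
  module

section sl2
variable (e f h : A)

lemma he_shift (hhe : h * e - e * h = (2 : ℚ) • e) (d : ℚ) :
    e * (h - d • 1) = (h - (d+2) • 1) * e := by
  have h1 : h * e = e * h + (2:ℚ) • e := by rw [← hhe]; abel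
  rw [mul_sub, sub_mul, mul_smul_comm, smul_mul_assoc, mul_one, one_mul, h1]
  module

lemma binom_shift (hhe : h * e - e * h = (2 : ℚ) • e) (c : ℚ) (m : ℕ) :
    e * binomElt (h - c • 1) m = binomElt (h - (c+2) • 1) m * e := by
  induction m with
  | zero => rw [binomElt_zero, binomElt_zero, mul_one, one_mul]
  | succ m ih =>
    have hm : ((m:ℚ)+1) ≠ 0 := by positivity
    apply smul_cancel hm
    rw [← mul_smul_comm, ← smul_mul_assoc, binomElt_succ_right, binomElt_succ_right,
      sub_smul_one, sub_smul_one, ← mul_assoc, ih, mul_assoc,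
      he_shift e h hhe (c + (m:ℚ)), ← mul_assoc]
    have hq : c + (m:ℚ) + 2 = c + 2 + (m:ℚ) := by ring
    rw [hq]

lemma hf_pow (hhf : h * f - f * h = (-2 : ℚ) • f) (j : ℕ) :
    h * f ^ j = f ^ j * h - (2 * (j:ℚ)) • f ^ j := by
  induction j with
  | zero => simp
  | succ j ih =>
    have h1 : h * f = f * h + (-2:ℚ) • f := by rw [← hhf]; abel
    push_cast
    calc h * f^(j+1) = (h*f) * f^j := by rw [pow_succ', ← mul_assoc]
    _ = f*(h*f^j) + (-2:ℚ)•f^(j+1) := by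
        rw [h1, add_mul, mul_assoc, smul_mul_assoc, ← pow_succ']
    _ = f*(f^j*h - (2*(j:ℚ))•f^j) + (-2:ℚ)•f^(j+1) := by rw [ih]
    _ = f^(j+1)*h - (2*((j:ℚ)+1))•f^(j+1) := by
        rw [mul_sub, ← mul_assoc, ← pow_succ', mul_smul_comm, ← pow_succ']
        module

lemma ef_pow (hhf : h * f - f * h = (-2 : ℚ) • f) (hef : e * f - f * e = h) (j : ℕ) :
    e * f ^ (j+1) = f ^ (j+1) * e + ((j:ℚ)+1) • (f ^ j * (h - (j:ℚ) • 1)) := by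
  induction j with
  | zero =>
    have h1 : e * f = f * e + h := by rw [← hef]; abel
    simp [h1]
  | succ j ih =>
    have h1 : e * f = f * e + h := by rw [← hef]; abel
    have hf2 : h * f^(j+1) = f^(j+1)*h - (2*((j:ℚ)+1)) • f^(j+1) := by
      have hc : (2*(((j:ℕ)+1:ℕ)):ℚ) = 2*((j:ℚ)+1) := by push_cast; ring
      rw [hf_pow f h hhf (j+1), hc]
    push_cast
    calc e * f^(j+2) = (e*f)*f^(j+1) := by rw [pow_succ', ← mul_assoc]
    _ = f*(e*f^(j+1)) + h*f^(j+1) := by rw [h1, add_mul, mul_assoc]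
    _ = f*(f^(j+1)*e + ((j:ℚ)+1)•(f^j*(h-(j:ℚ)•1)))
          + (f^(j+1)*h - (2*((j:ℚ)+1))•f^(j+1)) := by rw [ih, hf2]
    _ = f^(j+2)*e + ((j:ℚ)+1+1)•(f^(j+1)*(h-((j:ℚ)+1)•1)) := by
        rw [mul_add, ← mul_assoc, ← pow_succ', mul_smul_comm, ← mul_assoc, ← pow_succ']
        simp only [mul_sub, mul_smul_comm, mul_one, show j+1+1 = j+2 from rfl]
        module

end sl2

section dp
variable (e f h : A)

lemma dp_zero (x : A) : dividedPower x 0 = 1 := by simp [dividedPower]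

lemma fact_succ_inv (j : ℕ) : ((j+1).factorial:ℚ)⁻¹ * ((j:ℚ)+1) = ((j.factorial:ℚ))⁻¹ := by
  have h2 : ((j:ℚ)+1) ≠ 0 := by positivity
  have h3 : ((j.factorial:ℚ)) ≠ 0 := Nat.cast_ne_zero.2 j.factorial_ne_zero
  rw [Nat.factorial_succ]
  push_cast
  field_simp

lemma mul_dp (x : A) (l : ℕ) : x * dividedPower x l = ((l:ℚ)+1) • dividedPower x (l+1) := by
  unfold dividedPower
  rw [mul_smul_comm, smul_smul, ← pow_succ']
  congr 1
  rw [mul_comm, fact_succ_inv]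

lemma e_dpf (hhf : h * f - f * h = (-2 : ℚ) • f) (hef : e * f - f * e = h) (j : ℕ) :
    e * dividedPower f (j+1)
      = dividedPower f (j+1) * e + dividedPower f j * (h - (j:ℚ) • 1) := by
  unfold dividedPower
  rw [mul_smul_comm, ef_pow e f h hhf hef j, smul_add, smul_smul, smul_mul_assoc,
    smul_mul_assoc, fact_succ_inv]

lemma sub_add_one_smul (x : A) (c : ℚ) : (x - c • 1) - (1:A) = x - (c+1) • (1:A) := by
  rw [add_smul, one_smul]; abel

lemma sub_add_smul (x : A) (c d : ℚ) : (x - c • 1) + d • (1:A) = x - (c-d) • (1:A) := by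
  rw [sub_smul]; abel

lemma step_term (hhe : h * e - e * h = (2 : ℚ) • e) (hhf : h * f - f * h = (-2 : ℚ) • f)
    (hef : e * f - f * e = h) (k l m : ℕ) (hmk : m ≤ k) (hml : m ≤ l) :
    e * (dividedPower f (k-m) * binomElt (h - (((k:ℚ)+(l:ℚ)-2*(m:ℚ)) • (1:A))) m
        * dividedPower e (l-m))
      = ((l:ℚ)+1-(m:ℚ)) • (dividedPower f (k-m)
            * binomElt (h - (((k:ℚ)+(l:ℚ)+2-2*(m:ℚ)) • (1:A))) m * dividedPower e (l+1-m))
        + (if m < k then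
            dividedPower f (k-(m+1)) * ((h - (((k:ℚ)-1-(m:ℚ)) • (1:A)))
              * binomElt (h - (((k:ℚ)+(l:ℚ)-2*(m:ℚ)) • (1:A))) m) * dividedPower e (l-m)
          else 0) := by
  have hBshift : e * binomElt (h - (((k:ℚ)+(l:ℚ)-2*(m:ℚ)) • (1:A))) m
      = binomElt (h - (((k:ℚ)+(l:ℚ)+2-2*(m:ℚ)) • (1:A))) m * e := by
    have := binom_shift e h hhe ((k:ℚ)+(l:ℚ)-2*(m:ℚ)) m
    have hq : (k:ℚ)+(l:ℚ)-2*(m:ℚ)+2 = (k:ℚ)+(l:ℚ)+2-2*(m:ℚ) := by ring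
    rwa [hq] at this
  have hEstep : e * dividedPower e (l-m) = ((l:ℚ)+1-(m:ℚ)) • dividedPower e (l+1-m) := by
    rw [mul_dp e (l-m), show (l-m)+1 = l+1-m by omega]
    congr 1
    have : ((l-m:ℕ):ℚ) = (l:ℚ)-(m:ℚ) := by
      push_cast [Nat.cast_sub hml]; ring
    rw [this]; ring
  by_cases hlt : m < k
  · rw [if_pos hlt]
    have h1 : k - m = (k-m-1)+1 := by omega
    rw [h1, ← mul_assoc, ← mul_assoc, e_dpf e f h hhf hef (k-m-1), add_mul, add_mul]
    rw [mul_assoc (dividedPower f (k-m-1+1)) e _, hBshift, ← mul_assoc, mul_assoc _ e _,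
      hEstep, mul_smul_comm]
    have hc : ((k-m-1:ℕ):ℚ) = (k:ℚ)-1-(m:ℚ) := by
      have h2 : k-m-1 = k-(m+1) := by omega
      rw [h2, Nat.cast_sub (by omega : m+1 ≤ k)]
      push_cast; ring
    rw [show k-(m+1) = k-m-1 from by omega, hc, mul_assoc (dividedPower f (k-m-1))]
  · have hmkeq : m = k := le_antisymm hmk (not_lt.1 hlt)
    rw [if_neg hlt]
    subst hmkeq
    rw [Nat.sub_self, dp_zero, one_mul, one_mul, ← mul_assoc, hBshift, mul_assoc, hEstep,
      mul_smul_comm, add_zero]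

lemma key_term (k l m' : ℕ) (hmk : m'+1 ≤ k) :
    ((l:ℚ)+1) • (dividedPower f (k-(m'+1))
        * binomElt (h - (((k:ℚ)+((l+1:ℕ):ℚ)-2*((m'+1:ℕ):ℚ)) • (1:A))) (m'+1)
        * dividedPower e (l+1-(m'+1)))
      = ((l:ℚ)+1-((m'+1:ℕ):ℚ)) • (dividedPower f (k-(m'+1))
            * binomElt (h - (((k:ℚ)+(l:ℚ)+2-2*((m'+1:ℕ):ℚ)) • (1:A))) (m'+1)
            * dividedPower e (l+1-(m'+1)))
        + dividedPower f (k-(m'+1)) * ((h - (((k:ℚ)-1-(m':ℚ)) • (1:A)))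
            * binomElt (h - (((k:ℚ)+(l:ℚ)-2*(m':ℚ)) • (1:A))) m') * dividedPower e (l-m') := by
  have hE : l+1-(m'+1) = l-m' := by omega
  rw [hE]
  have e1 : (k:ℚ)+((l+1:ℕ):ℚ)-2*((m'+1:ℕ):ℚ) = (k:ℚ)+(l:ℚ)-1-2*(m':ℚ) := by push_cast; ring
  have e2 : (k:ℚ)+(l:ℚ)+2-2*((m'+1:ℕ):ℚ) = ((k:ℚ)+(l:ℚ)-1-2*(m':ℚ))+1 := by push_cast; ring
  have e4 : (l:ℚ)+1-((m'+1:ℕ):ℚ) = (l:ℚ)-(m':ℚ) := by push_cast; ring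
  rw [e1, e2, e4]
  have hp := pascal (h - (((k:ℚ)+(l:ℚ)-1-2*(m':ℚ)) • (1:A))) ((l:ℚ)-(m':ℚ)) m'
  rw [show (l:ℚ)-(m':ℚ) + ((m':ℚ)+1) = (l:ℚ)+1 from by ring,
    sub_add_one_smul, sub_add_smul,
    show (k:ℚ)+(l:ℚ)-1-2*(m':ℚ) - ((l:ℚ)-(m':ℚ)) = (k:ℚ)-1-(m':ℚ) from by ring] at hp
  rw [← smul_mul_assoc, ← mul_smul_comm, hp, mul_add, add_mul, mul_smul_comm, smul_mul_assoc,
    show (k:ℚ)+(l:ℚ)-1-2*(m':ℚ)+1 = (k:ℚ)+(l:ℚ)-2*(m':ℚ) from by ring]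

end dp

end

/-- In the universal enveloping algebra of `sl₂` over `ℚ` (equivalently, in any
`ℚ`-algebra with elements `e, f, h` satisfying the `sl₂` relations, since the identity is a
consequence of the relations), for all `k, l ∈ ℕ`,
`e^{(l)} f^{(k)} = Σ_{m=0}^{min(k,l)} f^{(k−m)} · binom(h − (k+l−2m)·1, m) · e^{(l−m)}`. -/
theorem sl2_divided_power_commutation
    {A : Type} [Ring A] [Algebra ℚ A]
    (e f h : A)
    (hhe : h * e - e * h = (2 : ℚ) • e)
    (hhf : h * f - f * h = (-2 : ℚ) • f)
    (hef : e * f - f * e = h)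
    (k l : ℕ) :
    dividedPower e l * dividedPower f k =
      ∑ m ∈ Finset.range (min k l + 1),
        dividedPower f (k - m) *
          binomElt (h - (((k : ℚ) + (l : ℚ) - 2 * (m : ℚ)) • (1 : A))) m *
          dividedPower e (l - m) := by
  induction l with
  | zero =>
    simp [Finset.sum_range_one, binomElt_zero, dp_zero]
  | succ l ih =>
    have hl1 : ((l:ℚ)+1) ≠ 0 := by positivity
    apply smul_cancel hl1
    rw [← smul_mul_assoc, ← mul_dp e l, mul_assoc, ih, Finset.mul_sum, Finset.smul_sum]
    have hstep : ∀ m ∈ Finset.range (min k l + 1),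
        e * (dividedPower f (k-m) * binomElt (h - (((k:ℚ)+(l:ℚ)-2*(m:ℚ)) • (1:A))) m
            * dividedPower e (l-m))
          = (((l:ℚ)+1-(m:ℚ)) • (dividedPower f (k-m)
                * binomElt (h - (((k:ℚ)+(l:ℚ)+2-2*(m:ℚ)) • (1:A))) m * dividedPower e (l+1-m))
            + (if m < k then
                dividedPower f (k-(m+1)) * ((h - (((k:ℚ)-1-(m:ℚ)) • (1:A)))
                  * binomElt (h - (((k:ℚ)+(l:ℚ)-2*(m:ℚ)) • (1:A))) m) * dividedPower e (l-m)
              else 0)) := by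
      intro m hm
      simp only [Finset.mem_range] at hm
      exact step_term e f h hhe hhf hef k l m (by omega) (by omega)
    have hkey : ∀ m ∈ Finset.range (min k (l+1) + 1),
        ((l:ℚ)+1) • (dividedPower f (k-m)
            * binomElt (h - (((k:ℚ)+((l+1:ℕ):ℚ)-2*((m:ℕ):ℚ)) • (1:A))) m
            * dividedPower e (l+1-m))
          = (((l:ℚ)+1-(m:ℚ)) • (dividedPower f (k-m)
                * binomElt (h - (((k:ℚ)+(l:ℚ)+2-2*(m:ℚ)) • (1:A))) m * dividedPower e (l+1-m))
            + (if hm0 : m = 0 then 0 else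
                dividedPower f (k-m) * ((h - (((k:ℚ)-1-((m-1:ℕ):ℚ)) • (1:A)))
                  * binomElt (h - (((k:ℚ)+(l:ℚ)-2*((m-1:ℕ):ℚ)) • (1:A))) (m-1))
                  * dividedPower e (l-(m-1)))) := by
      intro m hm
      simp only [Finset.mem_range] at hm
      match m with
      | 0 => simp [binomElt_zero]
      | m'+1 =>
        simp only [Nat.add_sub_cancel, dif_neg (Nat.succ_ne_zero m')]
        exact key_term e f h k l m' (by omega)
    rw [Finset.sum_congr rfl hstep, Finset.sum_congr rfl hkey,
      Finset.sum_add_distrib, Finset.sum_add_distrib]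
    rcases le_or_gt k l with hkl | hlk
    · have h1 : min k l = k := Nat.min_eq_left hkl
      have h2 : min k (l+1) = k := Nat.min_eq_left (by omega)
      rw [h1, h2]
      congr 1
      rw [Finset.sum_range_succ, if_neg (lt_irrefl k), add_zero, Finset.sum_range_succ']
      simp only [dif_neg (Nat.succ_ne_zero _), Nat.add_sub_cancel]
      rw [dif_pos trivial, add_zero]
      apply Finset.sum_congr rfl
      intro m hm
      rw [if_pos (Finset.mem_range.1 hm)]
    · have h1 : min k l = l := Nat.min_eq_right (by omega)
      have h2 : min k (l+1) = l+1 := Nat.min_eq_right (by omega)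
      rw [h1, h2]
      have hU0 : ((l:ℚ)+1-((l+1:ℕ):ℚ)) • (dividedPower f (k-(l+1))
            * binomElt (h - (((k:ℚ)+(l:ℚ)+2-2*(((l+1:ℕ)):ℚ)) • (1:A))) (l+1)
            * dividedPower e (l+1-(l+1))) = 0 := by
        rw [show (l:ℚ)+1-((l+1:ℕ):ℚ) = 0 from by push_cast; ring, zero_smul]
      rw [Finset.sum_range_succ (n := l+1), hU0, add_zero, Finset.sum_range_succ' (n := l+1)]
      simp only [dif_neg (Nat.succ_ne_zero _), Nat.add_sub_cancel]
      rw [dif_pos trivial, add_zero]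
      congr 1
      apply Finset.sum_congr rfl
      intro m hm
      simp only [Finset.mem_range] at hm
      rw [if_pos (by omega)]
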